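/- For integers 1 ≤ k ≤ m ≤ 2k−1, the number of Grassmannian involutions of {1,…,m} that avoid id_k equals ⌊(2k−m)²/4⌋. -/
import Mathlib

/-- A permutation of `{1,…,n}` (modeled as `Fin n`) is Grassmannian if it has
at most one descent, where a descent is a position `i` with `σ(i) > σ(i+1)`. -/
def IsGrassmannian {n : ℕ} (σ : Equiv.Perm (Fin n)) : Prop :=
  {i : ℕ | ∃ h : i + 1 < n, σ ⟨i + 1, h⟩ < σ ⟨i, Nat.lt_of_succ_lt h⟩}.Subsingleton

/-- `σ` avoids the identity pattern `id_k`: it has no increasing subsequence of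
length `k`. -/
def AvoidsIdPat {m : ℕ} (k : ℕ) (σ : Equiv.Perm (Fin m)) : Prop :=
  ¬ ∃ f : Fin k → Fin m, StrictMono f ∧ StrictMono (fun i => σ (f i))

/-! ### Block-swap permutations -/

/-- The underlying function of the block swap permutation: swaps `[a, a+r)`
with `[a+r, a+2r)` by shifting by `r`. -/
def gfun (m a r i : ℕ) : ℕ :=
  if a + 2*r ≤ m ∧ a ≤ i ∧ i < a + r then i + r
  else if a + 2*r ≤ m ∧ a + r ≤ i ∧ i < a + 2*r then i - r
  else i

lemma gfun_lt {m a r i : ℕ} (h : i < m) : gfun m a r i < m := by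
  unfold gfun; split_ifs <;> omega

lemma gfun_invol (m a r i : ℕ) : gfun m a r (gfun m a r i) = i := by
  unfold gfun; split_ifs <;> omega

/-- The block swap permutation of `Fin m`. -/
def bsw (m a r : ℕ) : Equiv.Perm (Fin m) :=
  Function.Involutive.toPerm (fun i => ⟨gfun m a r i, gfun_lt i.2⟩)
    (fun i => Fin.ext (by simpa using gfun_invol m a r i))

lemma bsw_apply (m a r : ℕ) (i : Fin m) : (bsw m a r i : ℕ) = gfun m a r i := rfl

lemma bsw_descent {m a r i : ℕ} (h : i + 1 < m)
    (hd : bsw m a r ⟨i+1, h⟩ < bsw m a r ⟨i, Nat.lt_of_succ_lt h⟩) : i + 1 = a + r := by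
  rw [Fin.lt_def] at hd
  simp only [bsw_apply] at hd
  unfold gfun at hd
  split_ifs at hd <;> omega

lemma bsw_grass (m a r : ℕ) : IsGrassmannian (bsw m a r) := by
  intro x hx y hy
  obtain ⟨hx1, hx2⟩ := hx
  obtain ⟨hy1, hy2⟩ := hy
  have := bsw_descent hx1 hx2
  have := bsw_descent hy1 hy2
  omega

lemma bsw_invol (m a r : ℕ) : bsw m a r * bsw m a r = 1 := by
  ext i
  simp only [Equiv.Perm.mul_apply, Equiv.Perm.one_apply, bsw_apply]
  exact gfun_invol m a r i

lemma bsw_not_avoid {m a r k : ℕ} (hr : a + 2*r ≤ m) (hk : k + r ≤ m) :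
    ¬ AvoidsIdPat k (bsw m a r) := by
  intro hav
  apply hav
  refine ⟨fun t => ⟨if (t : ℕ) < a + r then t else t + r,
    by have := t.2; split_ifs <;> omega⟩, ?_, ?_⟩
  · intro s t hst
    rw [Fin.lt_def] at hst ⊢
    simp only
    split_ifs <;> omega
  · intro s t hst
    rw [Fin.lt_def] at hst ⊢
    simp only [bsw_apply]
    unfold gfun
    have hs := s.2; have ht := t.2
    split_ifs <;> omega

lemma strictMono_fin_le {k n : ℕ} {h : Fin k → Fin n} (hm : StrictMono h) (i : Fin k) :
    (i : ℕ) ≤ h i := by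
  obtain ⟨j, hj⟩ := i
  induction j with
  | zero => exact Nat.zero_le _
  | succ j ih =>
    have h1 : h ⟨j, by omega⟩ < h ⟨j+1, hj⟩ := hm (by simp [Fin.lt_def])
    rw [Fin.lt_def] at h1
    have h2 := ih (by omega)
    simp only at h1 h2 ⊢
    omega

lemma bsw_avoid {m a r k : ℕ} (hk1 : 1 ≤ k) (hr1 : 1 ≤ r) (hr : a + 2*r ≤ m)
    (hk : m < k + r) : AvoidsIdPat k (bsw m a r) := by
  rintro ⟨f, hf, hvf⟩
  have hval : ∀ s t : Fin k, s < t → gfun m a r (f s) < gfun m a r (f t) := by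
    intro s t hst
    have := hvf hst
    rw [Fin.lt_def] at this
    simpa only [bsw_apply] using this
  have hblocks : (∀ t : Fin k, ¬ (a ≤ (f t : ℕ) ∧ (f t : ℕ) < a + r)) ∨
      (∀ t : Fin k, ¬ (a + r ≤ (f t : ℕ) ∧ (f t : ℕ) < a + 2*r)) := by
    by_contra hcon
    push_neg at hcon
    obtain ⟨⟨s, hs1, hs2⟩, ⟨t, ht1, ht2⟩⟩ := hcon
    have hst : s < t := by
      rcases lt_trichotomy s t with h | h | h
      · exact h
      · exfalso; subst h; omega
      · exfalso
        have := hf h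
        rw [Fin.lt_def] at this
        omega
    have hv := hval s t hst
    have v1 : gfun m a r (f s) = (f s : ℕ) + r := by unfold gfun; split_ifs <;> omega
    have v2 : gfun m a r (f t) = (f t : ℕ) - r := by unfold gfun; split_ifs <;> omega
    rw [v1, v2] at hv
    omega
  obtain ⟨c, hcr, hcav⟩ : ∃ c, c + r ≤ m ∧ ∀ t : Fin k, ¬ (c ≤ (f t : ℕ) ∧ (f t : ℕ) < c + r) := by
    rcases hblocks with h | h
    · exact ⟨a, by omega, h⟩
    · exact ⟨a + r, by omega, fun t => by have := h t; omega⟩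
  have hmr : 1 ≤ m - r := by omega
  set h : Fin k → Fin (m - r) := fun t =>
    ⟨if (f t : ℕ) < c then (f t : ℕ) else (f t : ℕ) - r, by
      have h1 := (f t).2
      have h2 := hcav t
      split_ifs <;> omega⟩ with hh
  have hhm : StrictMono h := by
    intro s t hst
    have h1 := hf hst
    rw [Fin.lt_def] at h1 ⊢
    have h2 := hcav s
    have h3 := hcav t
    simp only [hh]
    split_ifs <;> omega
  have hle := strictMono_fin_le hhm ⟨k - 1, by omega⟩
  rw [hh] at hle
  simp only at hle
  have hb := (f ⟨k - 1, by omega⟩).2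
  have hc := hcav ⟨k - 1, by omega⟩
  split_ifs at hle <;> omega

/-! ### Classification of Grassmannian involutions -/

lemma v_steps {v : ℕ → ℕ} {p : ℕ} (hdes : ∀ i, i ≠ p → v i < v (i+1)) :
    ∀ (i n : ℕ), (∀ t, i ≤ t → t < i + n → t ≠ p) → v i + n ≤ v (i + n) := by
  intro i n
  induction n with
  | zero => simp
  | succ n ih =>
    intro h
    have h1 := ih (fun t ht1 ht2 => h t ht1 (by omega))
    have h2 := hdes (i+n) (h (i+n) (by omega) (by omega))
    have h3 : i + (n+1) = (i+n) + 1 := by omega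
    rw [h3]
    omega

lemma v_classify {m p : ℕ} {v : ℕ → ℕ} (hinv : ∀ i, v (v i) = i)
    (hid : ∀ i, m ≤ i → v i = i) (hlt : ∀ i, i < m → v i < m)
    (hdes : ∀ i, i ≠ p → v i < v (i+1)) (hne : ∃ i, v i ≠ i) :
    ∃ a r, 1 ≤ r ∧ a + 2*r ≤ m ∧ ∀ i, v i = gfun m a r i := by
  have L2 : ∀ i, p < i → v i ≤ i := by
    intro i hi
    rcases le_or_gt m i with h | h
    · exact (hid i h).le
    · have := v_steps hdes i (m - i) (fun t ht1 ht2 => by omega)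
      rw [show i + (m - i) = m from by omega, hid m le_rfl] at this
      have := hlt i h
      omega
  have hane := hne
  set a := Nat.find hane with hadef
  have ha : v a ≠ a := Nat.find_spec hane
  have amin : ∀ j, j < a → v j = j := by
    intro j hj
    by_contra hc
    have h : Nat.find hane ≤ j := Nat.find_le hc
    omega
  have hva : a < v a := by
    rcases lt_trichotomy (v a) a with h | h | h
    · have := amin (v a) h
      have := hinv a
      omega
    · omega
    · exact h
  have hap : a ≤ p := by
    by_contra h
    have := L2 a (by omega)
    omega
  have C1 : ∀ t, a + t ≤ p → a + t < v (a + t) := by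
    intro t
    induction t with
    | zero => intro _; simpa using hva
    | succ t ih =>
      intro ht
      have h1 := ih (by omega)
      have h2 := hdes (a+t) (by omega)
      have h3 : a + (t+1) = (a+t) + 1 := by omega
      rw [h3]
      omega
  have C2 : ∀ i, a ≤ i → i ≤ p → p < v i := by
    intro i h1 h2
    by_contra h
    push_neg at h
    have h3 := C1 (i - a) (by omega)
    rw [show a + (i - a) = i from by omega] at h3
    have h4 := C1 (v i - a) (by omega)
    rw [show a + (v i - a) = v i from by omega, hinv i] at h4
    omega
  have C3 : v a = p + 1 := by
    have h1 := C2 a le_rfl hap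
    by_contra hc
    have h2 : p + 1 < v a := by omega
    have h3 := v_steps hdes (p+1) (v a - (p+1)) (fun t ht1 ht2 => by omega)
    rw [show p + 1 + (v a - (p+1)) = v a from by omega, hinv a] at h3
    have h4 : v (p+1) < a := by omega
    have h5 := amin (v (p+1)) h4
    have h6 := hinv (p+1)
    omega
  have C4 : ∀ t, a + t ≤ p → v (a + t) = p + 1 + t := by
    intro t
    induction t with
    | zero => intro _; simpa using C3
    | succ t ih =>
      intro ht
      have ih' := ih (by omega)
      have hstep := hdes (a+t) (by omega)
      have h3 : a + (t+1) = (a+t) + 1 := by omega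
      rw [h3]
      by_contra hne'
      have hgt : p + 2 + t < v (a + t + 1) := by omega
      have hc_le : v (p+2+t) ≤ p+2+t := L2 _ (by omega)
      rcases eq_or_lt_of_le hc_le with heq | hlt'
      · have h5 := v_steps hdes (p+2+t) (v (a+t+1) - (p+2+t)) (fun s hs1 hs2 => by omega)
        rw [show p+2+t + (v (a+t+1) - (p+2+t)) = v (a+t+1) from by omega, hinv (a+t+1)] at h5
        omega
      · set c := v (p+2+t) with hcdef
        have hvc : v c = p+2+t := hinv (p+2+t)
        have hcp : c ≤ p := by
          by_contra h
          have := L2 c (by omega)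
          omega
        have hca : a ≤ c := by
          by_contra h
          have := amin c (by omega)
          omega
        rcases le_or_gt c (a+t) with h | h
        · have h6 := v_steps hdes c (a+t-c) (fun s hs1 hs2 => by omega)
          rw [show c + (a+t-c) = a+t from by omega] at h6
          omega
        · have h6 := v_steps hdes (a+t+1) (c - (a+t+1)) (fun s hs1 hs2 => by omega)
          rw [show a+t+1 + (c - (a+t+1)) = c from by omega] at h6
          omega
  refine ⟨a, p + 1 - a, by omega, ?_, ?_⟩
  · have h1 := C4 (p - a) (by omega)
    rw [show a + (p - a) = p from by omega] at h1
    have hpm : p < m := by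
      by_contra h
      have := hid p (by omega)
      have := C1 (p - a) (by omega)
      rw [show a + (p - a) = p from by omega] at this
      omega
    have := hlt p hpm
    omega
  · have hpm : p < m := by
      by_contra h
      have := hid p (by omega)
      have := C1 (p - a) (by omega)
      rw [show a + (p - a) = p from by omega] at this
      omega
    have hvp := C4 (p - a) (by omega)
    rw [show a + (p - a) = p from by omega] at hvp
    have h2rm : a + 2*(p + 1 - a) ≤ m := by
      have := hlt p hpm
      omega
    intro i
    rcases lt_or_ge i a with h | h
    · have := amin i h
      unfold gfun
      split_ifs <;> omega
    rcases le_or_gt i p with h2 | h2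
    · have h3 := C4 (i - a) (by omega)
      rw [show a + (i - a) = i from by omega] at h3
      unfold gfun
      split_ifs <;> omega
    rcases le_or_gt i (p + (p + 1 - a)) with h3 | h3
    · have h4 := C4 (i - p - 1) (by omega)
      have h5 := hinv (a + (i - p - 1))
      rw [h4, show p + 1 + (i - p - 1) = i from by omega] at h5
      unfold gfun
      split_ifs <;> omega
    · have h4 : v i ≤ i := L2 i (by omega)
      have h5 : v i = i := by
        rcases eq_or_lt_of_le h4 with h5 | h5
        · exact h5
        · exfalso
          have h6 : v (v i) = i := hinv i
          have h7 : v i ≤ p := by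
            by_contra h7
            have := L2 (v i) (by omega)
            omega
          have h8 : a ≤ v i := by
            by_contra h8
            have := amin (v i) (by omega)
            omega
          have h9 := C4 (v i - a) (by omega)
          rw [show a + (v i - a) = v i from by omega] at h9
          omega
      unfold gfun
      split_ifs <;> omega

lemma bsw_inj {m a r a' r' : ℕ} (h1 : 1 ≤ r) (h2 : a + 2*r ≤ m) (h1' : 1 ≤ r')
    (h2' : a' + 2*r' ≤ m) (he : bsw m a r = bsw m a' r') : a = a' ∧ r = r' := by
  have hg : ∀ i, ∀ hi : i < m, gfun m a r i = gfun m a' r' i := by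
    intro i hi
    have := congrArg (fun σ : Equiv.Perm (Fin m) => (σ ⟨i, hi⟩ : ℕ)) he
    simpa only [bsw_apply] using this
  have ha := hg a (by omega)
  have ha' := hg a' (by omega)
  have e1 : gfun m a r a = a + r := by unfold gfun; split_ifs <;> omega
  have e2 : gfun m a' r' a' = a' + r' := by unfold gfun; split_ifs <;> omega
  rw [e1] at ha
  rw [e2] at ha'
  unfold gfun at ha ha'
  split_ifs at ha <;> split_ifs at ha' <;> omega

/-! ### Counting -/

def Ufin (n : ℕ) : Finset (ℕ × ℕ) :=
  (Finset.range n ×ˢ Finset.range n).filter (fun p => p.1 + 2*p.2 + 2 ≤ n)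

lemma Ufin_card : ∀ n, (Ufin n).card = n^2/4 := by
  intro n
  induction n using Nat.strong_induction_on with
  | _ n ih =>
    match n with
    | 0 => decide
    | 1 => decide
    | (n+2) =>
      have hsplit : Ufin (n+2) =
          (Finset.image (fun a => (a, 0)) (Finset.range (n+1))) ∪
          (Finset.image (fun p : ℕ × ℕ => (p.1, p.2+1)) (Ufin n)) := by
        ext ⟨a, j⟩
        simp only [Ufin, Finset.mem_filter, Finset.mem_product, Finset.mem_range,
          Finset.mem_union, Finset.mem_image, Prod.mk.injEq, Prod.exists]
        constructor
        · rintro ⟨⟨ha, hj⟩, hc⟩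
          match j with
          | 0 => exact Or.inl ⟨a, by omega, rfl, rfl⟩
          | (j+1) => exact Or.inr ⟨a, j, ⟨⟨by omega, by omega⟩, by omega⟩, rfl, rfl⟩
        · rintro (⟨b, hb, rfl, rfl⟩ | ⟨b, c, ⟨⟨hb, hc⟩, hbc⟩, rfl, rfl⟩) <;>
            refine ⟨⟨by omega, by omega⟩, by omega⟩
      have hdisj : Disjoint (Finset.image (fun a => (a, 0)) (Finset.range (n+1)))
          (Finset.image (fun p : ℕ × ℕ => (p.1, p.2+1)) (Ufin n)) := by
        rw [Finset.disjoint_left]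
        rintro ⟨a, j⟩ h1 h2
        simp only [Finset.mem_image, Prod.mk.injEq, Prod.exists] at h1 h2
        obtain ⟨b, hb, rfl, rfl⟩ := h1
        obtain ⟨c, d, _, _, h⟩ := h2
        omega
      have hinj1 : Function.Injective (fun a : ℕ => (a, 0)) := by
        intro x y h; simpa using h
      have hinj2 : Function.Injective (fun p : ℕ × ℕ => (p.1, p.2+1)) := by
        rintro ⟨x1, x2⟩ ⟨y1, y2⟩ h
        simp only [Prod.mk.injEq] at h ⊢
        omega
      rw [hsplit, Finset.card_union_of_disjoint hdisj, Finset.card_image_of_injective _ hinj1,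
        Finset.card_image_of_injective _ hinj2, Finset.card_range, ih n (by omega)]
      have h1 : (n+2)^2 = n^2 + 4*(n+1) := by ring
      rw [h1, Nat.add_mul_div_left _ _ (by norm_num : (0:ℕ) < 4)]
      omega

def Tfin (m k : ℕ) : Finset (ℕ × ℕ) :=
  (Finset.range m ×ˢ Finset.range m).filter
    (fun p => m - k + 1 ≤ p.2 ∧ p.1 + 2*p.2 ≤ m)

lemma help1 {m k a r : ℕ} (hk1 : 1 ≤ k) (hm1 : k ≤ m) (hm2 : m ≤ 2*k - 1)
    (h : (a < m ∧ r < m) ∧ m - k + 1 ≤ r ∧ a + 2 * r ≤ m) :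
    (a < 2*k - m ∧ r - (m - k + 1) < 2*k - m) ∧ a + 2 * (r - (m - k + 1)) + 2 ≤ 2*k - m := by
  omega

lemma help2 {m k a r : ℕ} (hk1 : 1 ≤ k) (hm1 : k ≤ m) (hm2 : m ≤ 2*k - 1)
    (h : (a < 2*k - m ∧ r < 2*k - m) ∧ a + 2 * r + 2 ≤ 2*k - m) :
    (a < m ∧ r + (m - k + 1) < m) ∧ m - k + 1 ≤ r + (m - k + 1) ∧
      a + 2 * (r + (m - k + 1)) ≤ m := by
  omega

lemma Tfin_card {m k : ℕ} (hk1 : 1 ≤ k) (hm1 : k ≤ m) (hm2 : m ≤ 2*k - 1) :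
    (Tfin m k).card = (2*k - m)^2/4 := by
  rw [← Ufin_card]
  refine Finset.card_bij' (fun p _ => (p.1, p.2 - (m - k + 1)))
      (fun p _ => (p.1, p.2 + (m - k + 1))) ?_ ?_ ?_ ?_
  · rintro ⟨a, r⟩ h
    simp only [Tfin, Ufin, Finset.mem_filter, Finset.mem_product, Finset.mem_range] at h ⊢
    exact help1 hk1 hm1 hm2 h
  · rintro ⟨a, r⟩ h
    simp only [Tfin, Ufin, Finset.mem_filter, Finset.mem_product, Finset.mem_range] at h ⊢
    exact help2 hk1 hm1 hm2 h
  · rintro ⟨a, r⟩ h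
    simp only [Tfin, Finset.mem_filter, Finset.mem_product, Finset.mem_range] at h
    have : r - (m - k + 1) + (m - k + 1) = r := by omega
    simp [this]
  · rintro ⟨a, r⟩ h
    have : r + (m - k + 1) - (m - k + 1) = r := by omega
    simp [this]

/-! ### Main theorem -/

theorem count_grassmannian_involutions_avoiding_identity (k m : ℕ) (hk : 1 ≤ k)
    (hm1 : k ≤ m) (hm2 : m ≤ 2 * k - 1) :
    {σ : Equiv.Perm (Fin m) |
        IsGrassmannian σ ∧ σ * σ = 1 ∧ AvoidsIdPat k σ}.ncard =
      (2 * k - m) ^ 2 / 4 := by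
  classical
  have hset : {σ : Equiv.Perm (Fin m) |
      IsGrassmannian σ ∧ σ * σ = 1 ∧ AvoidsIdPat k σ}
      = ↑((Tfin m k).image (fun p : ℕ × ℕ => bsw m p.1 p.2)) := by
    ext σ
    simp only [Set.mem_setOf_eq, Finset.coe_image, Set.mem_image, Finset.mem_coe]
    constructor
    · rintro ⟨hgr, hinvol, hav⟩
      set v : ℕ → ℕ := fun i => if h : i < m then (σ ⟨i, h⟩ : ℕ) else i with hv
      have hvlt : ∀ i, i < m → v i < m := by
        intro i hi
        simp only [hv, dif_pos hi]
        exact (σ ⟨i, hi⟩).2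
      have hid : ∀ i, m ≤ i → v i = i := by
        intro i hi
        simp only [hv, dif_neg (by omega : ¬ i < m)]
      have hσσ : ∀ x : Fin m, σ (σ x) = x := by
        intro x
        have := congrFun (congrArg (fun τ : Equiv.Perm (Fin m) => (τ : Fin m → Fin m)) hinvol) x
        simpa [Equiv.Perm.mul_apply] using this
      have hinv' : ∀ i, v (v i) = i := by
        intro i
        by_cases hi : i < m
        · have h2 : ((σ ⟨i, hi⟩ : ℕ)) < m := (σ ⟨i, hi⟩).2
          simp only [hv, dif_pos hi, dif_pos h2, Fin.eta]
          rw [hσσ]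
        · have h1 : v i = i := by simp only [hv, dif_neg hi]
          rw [h1, h1]
      have hne : ∃ i, v i ≠ i := by
        by_contra hc
        push_neg at hc
        have hσ1 : ∀ x : Fin m, σ x = x := by
          intro x
          have := hc x.1
          simp only [hv, dif_pos x.2, Fin.eta] at this
          exact Fin.ext this
        apply hav
        refine ⟨fun t => ⟨t.1, lt_of_lt_of_le t.2 hm1⟩, ?_, ?_⟩
        · intro s t hst
          rw [Fin.lt_def] at hst ⊢
          exact hst
        · intro s t hst
          simp only [hσ1]
          rw [Fin.lt_def] at hst ⊢
          exact hst
      have hdlift : ∀ i, (¬ ∃ h : i + 1 < m, σ ⟨i+1, h⟩ < σ ⟨i, Nat.lt_of_succ_lt h⟩) →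
          v i < v (i+1) := by
        intro i hnd
        by_cases h1 : i + 1 < m
        · have h0 : i < m := by omega
          have h2 : ¬ σ ⟨i+1, h1⟩ < σ ⟨i, Nat.lt_of_succ_lt h1⟩ := fun hc => hnd ⟨h1, hc⟩
          have h3 : σ ⟨i, Nat.lt_of_succ_lt h1⟩ ≠ σ ⟨i+1, h1⟩ := by
            intro hc
            have := σ.injective hc
            simp only [Fin.mk.injEq] at this
            omega
          have h4 : σ ⟨i, Nat.lt_of_succ_lt h1⟩ < σ ⟨i+1, h1⟩ :=
            lt_of_le_of_ne (not_lt.mp h2) h3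
          rw [Fin.lt_def] at h4
          simp only [hv, dif_pos h1, dif_pos h0]
          exact h4
        · by_cases h0 : i < m
          · have hi1 : i + 1 = m := by omega
            have := hvlt i h0
            have h5 : v (i+1) = i + 1 := hid (i+1) (by omega)
            omega
          · have h5 : v i = i := hid i (by omega)
            have h6 : v (i+1) = i+1 := hid (i+1) (by omega)
            omega
      obtain ⟨p, hp⟩ : ∃ p : ℕ, ∀ i, i ≠ p → v i < v (i+1) := by
        by_cases hD : ∃ q : ℕ, ∃ h : q + 1 < m, σ ⟨q+1, h⟩ < σ ⟨q, Nat.lt_of_succ_lt h⟩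
        · obtain ⟨q, hq⟩ := hD
          refine ⟨q, fun i hiq => hdlift i ?_⟩
          intro hc
          exact hiq (hgr hc hq)
        · refine ⟨m, fun i _ => hdlift i ?_⟩
          intro hc
          exact hD ⟨i, hc⟩
      obtain ⟨a, r, hr1, hram, hgf⟩ := v_classify hinv' hid hvlt hp hne
      have hσb : σ = bsw m a r := by
        apply Equiv.ext
        intro x
        apply Fin.ext
        rw [bsw_apply]
        have := hgf x.1
        simp only [hv, dif_pos x.2, Fin.eta] at this
        exact this
      have hrk : m - k + 1 ≤ r := by
        by_contra hc
        have hkr : k + r ≤ m := by omega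
        exact bsw_not_avoid hram hkr (hσb ▸ hav)
      refine ⟨(a, r), ?_, hσb.symm⟩
      simp only [Tfin, Finset.mem_filter, Finset.mem_product, Finset.mem_range]
      exact ⟨⟨by omega, by omega⟩, hrk, hram⟩
    · rintro ⟨⟨a, r⟩, hmem, rfl⟩
      simp only [Tfin, Finset.mem_filter, Finset.mem_product, Finset.mem_range] at hmem
      exact ⟨bsw_grass m a r, bsw_invol m a r,
        bsw_avoid hk (by omega) (by omega) (by omega)⟩
  rw [hset, Set.ncard_coe_finset]
  have hinj : Set.InjOn (fun p : ℕ × ℕ => bsw m p.1 p.2) (Tfin m k) := by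
    rintro ⟨a, r⟩ hmem ⟨a', r'⟩ hmem' he
    simp only [Tfin, Finset.coe_filter, Finset.mem_coe, Finset.mem_product,
      Finset.mem_range, Set.mem_setOf_eq] at hmem hmem'
    simp only at he
    obtain ⟨h1, h2⟩ := bsw_inj (by omega) (by omega) (by omega) (by omega) he
    simp only [Prod.mk.injEq]
    exact ⟨h1, h2⟩
  rw [Finset.card_image_of_injOn hinj, Tfin_card hk hm1 hm2]
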